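/- If G is a triangle-free connected graph, d ≥ 2, and S ⊆ V(G) is a general d-position set, then S is a dissociation set of G. -/
import Mathlib


/-- `S` is a general `d`-position set of `G`: no three distinct vertices of `S`
lie on a common geodesic of length at most `d`. -/
def IsGenDPos {V : Type*} (G : SimpleGraph V) (d : ℕ) (S : Set V) : Prop :=
  ∀ ⦃u v w : V⦄, u ∈ S → v ∈ S → w ∈ S → u ≠ v → u ≠ w → v ≠ w →
    G.dist u v + G.dist v w = G.dist u w → G.dist u w ≤ d → False

/-- The general `d`-position number of `G`. -/
noncomputable def gpNum {V : Type*} (G : SimpleGraph V) (d : ℕ) : ℕ :=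
  sSup {n | ∃ S : Set V, IsGenDPos G d S ∧ S.ncard = n}

/-- S is a dissociation set: the subgraph induced by S has maximum degree at most 1. -/
def IsDissociation {V : Type*} (G : SimpleGraph V) (S : Set V) : Prop :=
  ∀ v ∈ S, {u | u ∈ S ∧ G.Adj v u}.Subsingleton

/-- In a triangle-free connected graph, every general d-position set (d ≥ 2) is a
dissociation set. -/
theorem stmt_12 {V : Type*} (G : SimpleGraph V) (hG : G.Connected)
    (htf : G.CliqueFree 3) (d : ℕ) (hd : 2 ≤ d) (S : Set V) (hS : IsGenDPos G d S) :
    IsDissociation G S := by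
  intro v hv u hu w hw
  by_contra hne
  obtain ⟨huS, hvu⟩ := hu
  obtain ⟨hwS, hvw⟩ := hw
  have hnadj : ¬ G.Adj u w := by
    intro h
    classical
    exact htf {u, v, w} (SimpleGraph.is3Clique_triple_iff.mpr ⟨hvu.symm, h, hvw⟩)
  have hd1 : G.dist u v = 1 := by
    rw [SimpleGraph.dist_eq_one_iff_adj]; exact hvu.symm
  have hd2 : G.dist v w = 1 := by
    rw [SimpleGraph.dist_eq_one_iff_adj]; exact hvw
  have hle : G.dist u w ≤ 2 := by
    calc G.dist u w ≤ G.dist u v + G.dist v w := hG.dist_triangle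
    _ = 2 := by omega
  have hne0 : G.dist u w ≠ 0 := by
    rw [SimpleGraph.dist_ne_zero_iff_ne_and_reachable]
    exact ⟨hne, hG.preconnected u w⟩
  have hne1 : G.dist u w ≠ 1 := fun h1 =>
    hnadj (SimpleGraph.dist_eq_one_iff_adj.mp h1)
  have h2 : G.dist u w = 2 := by omega
  exact hS huS hv hwS hvu.ne' (hne) (G.ne_of_adj hvw) (by omega) (by omega)
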